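/- Let A be an n×n real matrix of rank s < n and let U be an n×s matrix whose columns form an orthonormal basis of im(A). Then 0 is a defective eigenvalue of A if and only if 0 is an eigenvalue of the s×s matrix B₁ := Uᵀ A U (i.e., B₁ is singular). -/

import Mathlib

open Matrix

/-- For A of rank s < n and U an n×s matrix with orthonormal columns spanning im(A),
0 is a defective eigenvalue of A iff the s×s matrix Uᵀ A U is singular. -/
theorem stmt2 {n s : ℕ} (hs : s < n) (A : Matrix (Fin n) (Fin n) ℝ)
    (hrank : A.rank = s)
    (U : Matrix (Fin n) (Fin s) ℝ)
    (hU : Uᵀ * U = 1)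
    (hrange : LinearMap.range U.mulVecLin = LinearMap.range A.mulVecLin) :
    (Module.finrank ℝ (LinearMap.ker A.mulVecLin) <
      Polynomial.rootMultiplicity 0 A.charpoly) ↔ (Uᵀ * A * U).det = 0 := by
  classical
  have hUt : ∀ x : Fin s → ℝ, Uᵀ *ᵥ (U *ᵥ x) = x := fun x => by
    rw [mulVec_mulVec, hU, one_mulVec]
  have hUinj : Function.Injective U.mulVecLin := fun x y h => by
    have h2 := congrArg (fun v => Uᵀ *ᵥ v) h
    simpa [Matrix.mulVecLin_apply, hUt] using h2
  set W := LinearMap.range U.mulVecLin with hW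
  have hWs : Module.finrank ℝ W = s := by
    rw [← LinearEquiv.finrank_eq (LinearEquiv.ofInjective U.mulVecLin hUinj)]
    simp
  obtain ⟨W', hc⟩ := Submodule.exists_isCompl W
  have hW' : Module.finrank ℝ W' = n - s := by
    have h1 := Submodule.finrank_add_eq_of_isCompl hc
    have h2 : Module.finrank ℝ (Fin n → ℝ) = n := by simp
    omega
  let bW : Module.Basis (Fin s) ℝ W :=
    (Pi.basisFun ℝ (Fin s)).map (LinearEquiv.ofInjective U.mulVecLin hUinj)
  let bW' : Module.Basis (Fin (n - s)) ℝ W' := (Module.finBasis ℝ W').reindex (finCongr hW')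
  let b : Module.Basis (Fin s ⊕ Fin (n - s)) ℝ (Fin n → ℝ) :=
    (bW.prod bW').map (Submodule.prodEquivOfIsCompl W W' hc)
  have hbl : ∀ k, b (Sum.inl k) = U *ᵥ Pi.single k 1 := by
    intro k
    show (Submodule.prodEquivOfIsCompl W W' hc) ((bW.prod bW') (Sum.inl k)) = _
    rw [Module.Basis.prod_apply]
    simp only [Sum.elim_inl, Function.comp_apply, LinearMap.coe_inl,
      Submodule.coe_prodEquivOfIsCompl', Submodule.coe_zero, add_zero]
    show ((LinearEquiv.ofInjective U.mulVecLin hUinj) (Pi.basisFun ℝ (Fin s) k) : Fin n → ℝ) = _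
    simp [LinearEquiv.ofInjective_apply, Matrix.mulVecLin_apply, Pi.basisFun_apply]
  have hmem : ∀ v : Fin n → ℝ, A *ᵥ v ∈ W := by
    intro v
    have h : A.mulVecLin v ∈ LinearMap.range A.mulVecLin := ⟨v, rfl⟩
    rw [← hrange] at h
    exact h
  have hproj : ∀ x ∈ W, U *ᵥ (Uᵀ *ᵥ x) = x := by
    rintro x ⟨y, rfl⟩
    rw [Matrix.mulVecLin_apply, hUt]
  have hdecomp : ∀ v : Fin n → ℝ,
      A *ᵥ v = ∑ k : Fin s, (Uᵀ *ᵥ (A *ᵥ v)) k • b (Sum.inl k) := by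
    intro v
    conv_lhs => rw [← hproj _ (hmem v)]
    simp_rw [hbl]
    ext i
    simp [Matrix.mulVec, dotProduct, Finset.sum_apply, Matrix.mulVec_single, mul_comm]
  have hrepr : ∀ v : Fin n → ℝ,
      b.repr (A *ᵥ v) = ∑ k : Fin s, (Uᵀ *ᵥ (A *ᵥ v)) k • Finsupp.single (Sum.inl k) 1 := by
    intro v
    conv_lhs => rw [hdecomp v]
    simp [Module.Basis.repr_self]
  set M := LinearMap.toMatrix b b A.mulVecLin with hMdef
  have hMinr : ∀ (r : Fin (n - s)) (j : Fin s ⊕ Fin (n - s)), M (Sum.inr r) j = 0 := by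
    intro r j
    rw [hMdef, LinearMap.toMatrix_apply, Matrix.mulVecLin_apply, hrepr]
    simp [Finsupp.single_apply]
  have hM11 : ∀ k l : Fin s, M (Sum.inl k) (Sum.inl l) = (Uᵀ * A * U) k l := by
    intro k l
    rw [hMdef, LinearMap.toMatrix_apply, Matrix.mulVecLin_apply, hrepr]
    simp only [Finsupp.finset_sum_apply, Finsupp.smul_apply, Finsupp.single_apply]
    rw [Finset.sum_eq_single k]
    · rw [hbl l]
      have hsl : (Pi.single l 1 : Fin s → ℝ) = Pi.single l 1 := rfl
      rw [Matrix.mulVec_mulVec, Matrix.mulVec_mulVec, Matrix.mulVec_single_one]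
      simp [Matrix.mul_assoc]
    · intro c _ hc
      simp [Sum.inl.injEq, hc]
    · simp
  have hM : M = Matrix.fromBlocks (Uᵀ * A * U) (M.toBlocks₁₂) 0 0 := by
    ext i j
    rcases i with k | r <;> rcases j with l | r' <;>
      simp [Matrix.fromBlocks, Matrix.toBlocks₁₂, hM11, hMinr]
  have hzero : (0 : Matrix (Fin (n - s)) (Fin (n - s)) ℝ).charpoly =
      Polynomial.X ^ (n - s) := by
    rw [Matrix.charpoly, charmatrix]
    simp [Matrix.det_diagonal]
  have hcA : A.charpoly = (Uᵀ * A * U).charpoly * Polynomial.X ^ (n - s) := by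
    have h1 : A.charpoly = M.charpoly := by
      have h2 : A =
          LinearMap.toMatrix (Pi.basisFun ℝ (Fin n)) (Pi.basisFun ℝ (Fin n)) A.mulVecLin := by
        rw [LinearMap.toMatrix_eq_toMatrix']
        rw [show A.mulVecLin = Matrix.toLin' A from rfl, LinearMap.toMatrix'_toLin']
      conv_lhs => rw [h2]
      rw [LinearMap.charpoly_toMatrix, ← LinearMap.charpoly_toMatrix A.mulVecLin b]
    rw [h1, hM, Matrix.charpoly_fromBlocks_zero₂₁, hzero]
  have hp0 : (Uᵀ * A * U).charpoly ≠ 0 := (Matrix.charpoly_monic _).ne_zero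
  have hX : (Polynomial.X : Polynomial ℝ) ^ (n - s) ≠ 0 :=
    pow_ne_zero _ Polynomial.X_ne_zero
  have hrm : Polynomial.rootMultiplicity 0 A.charpoly =
      Polynomial.rootMultiplicity 0 (Uᵀ * A * U).charpoly + (n - s) := by
    rw [hcA, Polynomial.rootMultiplicity_mul (mul_ne_zero hp0 hX)]
    congr 1
    rw [Polynomial.rootMultiplicity_eq_natTrailingDegree',
      Polynomial.natTrailingDegree_X_pow]
  have hker : Module.finrank ℝ (LinearMap.ker A.mulVecLin) = n - s := by
    have h1 := LinearMap.finrank_range_add_finrank_ker A.mulVecLin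
    have h2 : Module.finrank ℝ (Fin n → ℝ) = n := by simp
    unfold Matrix.rank at hrank
    omega
  rw [hker, hrm]
  have hiff : n - s < Polynomial.rootMultiplicity 0 (Uᵀ * A * U).charpoly + (n - s) ↔
      0 < Polynomial.rootMultiplicity 0 (Uᵀ * A * U).charpoly := by omega
  rw [hiff, Polynomial.rootMultiplicity_pos hp0]
  have hdet := Matrix.det_eq_sign_charpoly_coeff (Uᵀ * A * U)
  simp only [Polynomial.IsRoot.def, ← Polynomial.coeff_zero_eq_eval_zero]
  constructor
  · intro hcoef
    rw [hdet, hcoef, mul_zero]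
  · intro hd
    rw [hdet] at hd
    rcases mul_eq_zero.mp hd with h | h
    · exact absurd h (pow_ne_zero _ (by norm_num))
    · exact h
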